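/- In the harmonious Hilbert curve permutation function, deleting a coordinate is compatible with the permutations: let r be a d-bit number, let i be an index such that r with bit i deleted is r', and suppose the last bit of r' equals the last bit of r (i.e. r'_{d-2} = r_{d-1}). Then take_i(a(r)) = a'(r'), where a and a' are the harmonious Hilbert permutations in dimensions d and d-1 respectively, and take_i applied to a permutation removes the entry a_i and renumbers the remaining values consecutively. -/

import Mathlib

/-- The value sequence of the inverse of the harmonious Hilbert permutation of a
`(n+1)`-bit binary string `r`: it is obtained from the identity permutation
`(0, 1, ..., n)` by moving all indices `h` with `r h ≠ r_{d-1}` (where `r_{d-1}` is the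
last bit) to the front in reversed order, and reversing the order of the remaining
indices (those with `r h = r_{d-1}`) as well. -/
def harmoniousInvList (n : ℕ) (r : Fin (n + 1) → Fin 2) : List (Fin (n + 1)) :=
  ((List.finRange (n + 1)).filter (fun h => r h ≠ r (Fin.last n))).reverse
    ++ ((List.finRange (n + 1)).filter (fun h => r h = r (Fin.last n))).reverse

lemma harmoniousInvList_perm (n : ℕ) (r : Fin (n + 1) → Fin 2) :
    (harmoniousInvList n r).Perm (List.finRange (n + 1)) := by
  unfold harmoniousInvList
  refine ((List.reverse_perm _).append (List.reverse_perm _)).trans ?_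
  have h := List.filter_append_perm (fun h => !decide (r h = r (Fin.last n)))
    (List.finRange (n + 1))
  simpa [decide_not, Bool.not_not] using h

lemma map_succAbove_finRange (n : ℕ) (i : Fin (n + 2)) :
    (List.finRange (n + 1)).map i.succAbove
      = (List.finRange (n + 2)).filter (fun h => h ≠ i) := by
  have h1 : ((List.finRange (n + 1)).map i.succAbove).Pairwise (· ≤ ·) :=
    ((List.pairwise_lt_finRange _).map _
      (fun _ _ h => (Fin.strictMono_succAbove i) h)).imp le_of_lt
  have h2 : (((List.finRange (n + 2)).filter (fun h => h ≠ i))).Pairwise (· ≤ ·) :=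
    ((List.pairwise_lt_finRange _).filter _).imp le_of_lt
  have hp : ((List.finRange (n + 1)).map i.succAbove).Perm
      ((List.finRange (n + 2)).filter (fun h => h ≠ i)) := by
    refine (List.perm_ext_iff_of_nodup
      ((List.nodup_finRange _).map (Fin.succAbove_right_injective))
      ((List.nodup_finRange _).filter _)).mpr ?_
    intro x
    simp [List.mem_filter, Fin.exists_succAbove_eq_iff]
  exact List.Perm.eq_of_pairwise' h1 h2 hp

lemma harmoniousInvList_erase (n : ℕ) (r : Fin (n + 2) → Fin 2) (i : Fin (n + 2))
    (hlast : r (i.succAbove (Fin.last n)) = r (Fin.last (n + 1))) :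
    (harmoniousInvList (n + 1) r).erase i
      = (harmoniousInvList n (fun t => r (i.succAbove t))).map i.succAbove := by
  have hnd : (harmoniousInvList (n + 1) r).Nodup :=
    (harmoniousInvList_perm _ _).symm.nodup (List.nodup_finRange _)
  rw [hnd.erase_eq_filter]
  unfold harmoniousInvList
  rw [List.filter_append, List.filter_reverse, List.filter_reverse,
      List.map_append, List.map_reverse, List.map_reverse]
  congr 1
  · congr 1
    rw [List.filter_filter]
    have hp : (fun t : Fin (n+1) => decide ((fun t => r (i.succAbove t)) t ≠ (fun t => r (i.succAbove t)) (Fin.last n)))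
        = (fun h : Fin (n+2) => decide (r h ≠ r (Fin.last (n+1)))) ∘ i.succAbove := by
      funext t
      simp [hlast, Function.comp]
    rw [hp, ← List.filter_map, map_succAbove_finRange, List.filter_filter]
    apply List.filter_congr
    intro x _
    by_cases hxi : x = i <;> by_cases hr : r x = r (Fin.last (n + 1)) <;>
      simp [hxi, hr]
  · congr 1
    rw [List.filter_filter]
    have hp : (fun t : Fin (n+1) => decide ((fun t => r (i.succAbove t)) t = (fun t => r (i.succAbove t)) (Fin.last n)))
        = (fun h : Fin (n+2) => decide (r h = r (Fin.last (n+1)))) ∘ i.succAbove := by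
      funext t
      simp [hlast, Function.comp]
    rw [hp, ← List.filter_map, map_succAbove_finRange, List.filter_filter]
    apply List.filter_congr
    intro x _
    by_cases hxi : x = i <;> by_cases hr : r x = r (Fin.last (n + 1)) <;>
      simp [hxi, hr]

/-- Deleting a coordinate is compatible with the harmonious Hilbert permutations.
Let `r` be a `d`-bit string (`d = n + 2`), let `i` be an index, and let
`r' = take_i(r)` be `r` with bit `i` deleted (so `r' j = r (i.succAbove j)`).  Suppose
the last bit of `r'` equals the last bit of `r`.  Let `a` and `a'` be the harmonious
Hilbert permutations of `r` and `r'` in dimensions `d` and `d - 1` (characterized by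
their inverses, as sequences obtained from the identity by moving the indices `h` with
`r_h ≠ r_{d-1}` to the front reversed and reversing the remaining indices as well).
Then `take_i(a(r)) = a'(r')`: deleting entry `a_i` from the value sequence of `a` and
decreasing by one every remaining entry exceeding `a_i` yields exactly `a'`. -/
theorem harmonious_permutation_take_coordinate
    (n : ℕ) (r : Fin (n + 2) → Fin 2) (i : Fin (n + 2))
    (a : Equiv.Perm (Fin (n + 2))) (a' : Equiv.Perm (Fin (n + 1)))
    (hlast : r (i.succAbove (Fin.last n)) = r (Fin.last (n + 1)))
    (ha : ∀ j : Fin (n + 2),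
      (harmoniousInvList (n + 1) r)[(j : ℕ)]? = some (a.symm j))
    (ha' : ∀ j : Fin (n + 1),
      (harmoniousInvList n (fun t => r (i.succAbove t)))[(j : ℕ)]? = some (a'.symm j)) :
    ∀ j : Fin (n + 1), (a' j : ℕ) =
      if (a (i.succAbove j) : ℕ) < (a i : ℕ)
      then (a (i.succAbove j) : ℕ)
      else (a (i.succAbove j) : ℕ) - 1 := by
  intro j
  set L := harmoniousInvList (n + 1) r with hLdef
  set L' := harmoniousInvList n (fun t => r (i.succAbove t)) with hL'def
  have hlenL : L.length = n + 2 :=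
    (harmoniousInvList_perm _ _).length_eq.trans List.length_finRange
  have hlenL' : L'.length = n + 1 :=
    (harmoniousInvList_perm _ _).length_eq.trans List.length_finRange
  have hnd : L.Nodup := (harmoniousInvList_perm _ _).symm.nodup (List.nodup_finRange _)
  have hget : ∀ k : Fin (n + 2),
      L[(k : ℕ)]'(by rw [hlenL]; exact k.isLt) = a.symm k := by
    intro k
    have h := ha k
    rwa [List.getElem?_eq_getElem (by rw [hlenL]; exact k.isLt), Option.some_inj] at h
  have hget' : ∀ k : Fin (n + 1),
      L'[(k : ℕ)]'(by rw [hlenL']; exact k.isLt) = a'.symm k := by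
    intro k
    have h := ha' k
    rwa [List.getElem?_eq_getElem (by rw [hlenL']; exact k.isLt), Option.some_inj] at h
  have hidx : L.idxOf i = ((a i : ℕ)) := by
    have h1 : L[((a i : ℕ))]'(by rw [hlenL]; exact (a i).isLt) = i := by
      simpa using hget (a i)
    conv_lhs => rw [← h1]
    exact hnd.idxOf_getElem _ _
  have key : L.eraseIdx ((a i : ℕ)) = L'.map i.succAbove := by
    rw [← hidx, List.eraseIdx_idxOf_eq_erase]
    exact harmoniousInvList_erase n r i hlast
  have hlen2 : (L.eraseIdx ((a i : ℕ))).length = n + 1 := by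
    rw [List.length_eraseIdx, if_pos (by rw [hlenL]; exact (a i).isLt)]
    omega
  have hj : (L.eraseIdx ((a i : ℕ)))[((a' j : ℕ))]? = some (i.succAbove j) := by
    rw [key, List.getElem?_eq_getElem (by rw [List.length_map, hlenL']; exact (a' j).isLt),
      List.getElem_map, Option.some_inj]
    have := hget' (a' j)
    simp only [this, Equiv.symm_apply_apply]
  rcases lt_or_ge ((a' j : ℕ)) ((a i : ℕ)) with hlt | hge
  · rw [List.getElem?_eraseIdx_of_lt hlt] at hj
    have h1 : a.symm (⟨(a' j : ℕ), by omega⟩ : Fin (n + 2)) = i.succAbove j := by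
      rw [← Option.some_inj, ← ha ⟨(a' j : ℕ), by omega⟩]
      exact hj
    have h2 : a (i.succAbove j) = (⟨(a' j : ℕ), by omega⟩ : Fin (n + 2)) :=
      ((Equiv.symm_apply_eq a).mp h1).symm
    rw [h2, if_pos hlt]
  · rw [List.getElem?_eraseIdx_of_ge hge] at hj
    have hb : (a' j : ℕ) + 1 < n + 2 := by have := (a' j).isLt; omega
    have h1 : a.symm (⟨(a' j : ℕ) + 1, hb⟩ : Fin (n + 2)) = i.succAbove j := by
      rw [← Option.some_inj, ← ha ⟨(a' j : ℕ) + 1, hb⟩]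
      exact hj
    have h2 : a (i.succAbove j) = (⟨(a' j : ℕ) + 1, hb⟩ : Fin (n + 2)) :=
      ((Equiv.symm_apply_eq a).mp h1).symm
    rw [h2]
    have hneg : ¬ (((⟨(a' j : ℕ) + 1, hb⟩ : Fin (n + 2)) : ℕ) < (a i : ℕ)) := by
      simp only [Fin.val_mk]; omega
    rw [if_neg hneg]
    simp only [Fin.val_mk]
    omega
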